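/- π(2m) > 1 + π(m) + (m+1) - 2 for m large: for every m ≥ 4, the number of partitions satisfies π(2m) > π(m) + m, showing that 𝒞_{2m} is strictly bigger than ℰ𝒫_{2m} + ℋ𝒯_{2m} (which has dimension at most (1 + π(m)) + (m+1) - 2). -/
import Mathlib

/-- Auxiliary partition of `2*m` with parts `(2*m - j)` and `j` ones. -/
def gpart (m j : ℕ) (hj : j < 2 * m) : Nat.Partition (2 * m) where
  parts := (2 * m - j) ::ₘ Multiset.replicate j 1
  parts_pos := by
    intro a ha
    rcases Multiset.mem_cons.mp ha with h | h
    · omega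
    · have := Multiset.eq_of_mem_replicate h; omega
  parts_sum := by
    simp [Multiset.sum_replicate]
    omega

/-- Auxiliary partition of `2*m` obtained by adding a part `m` to a partition of `m`. -/
def fpart (m : ℕ) (hm : 0 < m) (p : Nat.Partition m) : Nat.Partition (2 * m) where
  parts := m ::ₘ p.parts
  parts_pos := by
    intro a ha
    rcases Multiset.mem_cons.mp ha with h | h
    · omega
    · exact p.parts_pos h
  parts_sum := by
    simp [p.parts_sum]; omega

/-- for all m ≥ 4, the number of partitions satisfies
π(2m) > π(m) + m. -/
theorem partitions_double_gt (m : ℕ) (hm : 4 ≤ m) :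
    Fintype.card (Nat.Partition (2 * m)) > Fintype.card (Nat.Partition m) + m := by
  have hm0 : 0 < m := by omega
  have he : ∀ k : Fin (m + 1), (if (k : ℕ) < m then (k : ℕ) else 2 * m - 1) < 2 * m := by
    intro k; split <;> omega
  set f : Nat.Partition m ⊕ Fin (m + 1) → Nat.Partition (2 * m) :=
    Sum.elim (fpart m hm0) (fun k => gpart m _ (he k)) with hf
  have hinj : Function.Injective f := by
    rintro (p | k) (q | k') hxy <;> simp only [hf, Sum.elim_inl, Sum.elim_inr] at hxy
    · have h1 : (fpart m hm0 p).parts = (fpart m hm0 q).parts := by rw [hxy]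
      simp only [fpart] at h1
      have := (Multiset.cons_inj_right m).mp h1
      exact congrArg Sum.inl (Nat.Partition.ext this)
    · exfalso
      have h1 : m ∈ (fpart m hm0 p).parts := Multiset.mem_cons_self _ _
      rw [hxy] at h1
      simp only [gpart, Multiset.mem_cons] at h1
      rcases h1 with h | h
      · split at h <;> omega
      · have := Multiset.eq_of_mem_replicate h; omega
    · exfalso
      have h1 : m ∈ (fpart m hm0 q).parts := Multiset.mem_cons_self _ _
      rw [← hxy] at h1
      simp only [gpart, Multiset.mem_cons] at h1
      rcases h1 with h | h
      · split at h <;> omega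
      · have := Multiset.eq_of_mem_replicate h; omega
    · have h1 : (gpart m _ (he k)).parts = (gpart m _ (he k')).parts := by rw [hxy]
      simp only [gpart] at h1
      have h2 := congrArg (Multiset.count 1) h1
      simp only [Multiset.count_cons, Multiset.count_replicate] at h2
      have hk : (k : ℕ) < m + 1 := k.isLt
      have hk' : (k' : ℕ) < m + 1 := k'.isLt
      refine congrArg Sum.inr (Fin.ext ?_)
      split_ifs at h2 <;> omega
  have hcard := Fintype.card_le_of_injective f hinj
  simp [Fintype.card_sum] at hcard
  omega
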